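/- Let κ₋, κ₃ > 0 and fix v₀ ∈ ℝ. Every solution of the scalar ODE û' = −κ₃û(û − v₀) + κ₋ with û(0) > 0 converges to U(v₀) = (v₀ + √(v₀² + 4κ₋/κ₃))/2 as τ → ∞, and the convergence is exponential. -/

import Mathlib

open Set Filter Topology

set_option maxHeartbeats 1000000

lemma ode_barrier (f : ℝ → ℝ) (f' : ℝ → ℝ) (m : ℝ) (h0 : m < f 0)
    (hd : ∀ τ ≥ (0:ℝ), HasDerivAt f (f' τ) τ)
    (hpos : ∀ τ ≥ (0:ℝ), f τ = m → 0 < f' τ) :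
    ∀ τ ≥ (0:ℝ), m < f τ := by
  by_contra hcon
  push_neg at hcon
  obtain ⟨T, hT0, hTle⟩ := hcon
  set S : Set ℝ := Ici (0:ℝ) ∩ f ⁻¹' Iic m with hS
  have hcont : ContinuousOn f (Ici 0) := fun t ht =>
    (hd t ht).continuousAt.continuousWithinAt
  have hclosed : IsClosed S :=
    hcont.preimage_isClosed_of_isClosed isClosed_Ici isClosed_Iic
  have hne : S.Nonempty := ⟨T, hT0, hTle⟩
  have hbdd : BddBelow S := ⟨0, fun t ht => ht.1⟩
  set t₀ := sInf S with ht₀def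
  have ht₀S : t₀ ∈ S := hclosed.csInf_mem hne hbdd
  have ht₀0 : 0 ≤ t₀ := ht₀S.1
  have ht₀le : f t₀ ≤ m := ht₀S.2
  have hlt : ∀ t, 0 ≤ t → t < t₀ → m < f t := by
    intro t ht htlt
    by_contra h
    push_neg at h
    exact absurd (csInf_le hbdd ⟨ht, h⟩) (not_le.2 htlt)
  have ht₀pos : 0 < t₀ := by
    rcases lt_or_eq_of_le ht₀0 with h | h
    · exact h
    · exact absurd ht₀le (not_le.2 (h ▸ h0))
  have hIoo : Ioo (0:ℝ) t₀ ∈ 𝓝[<] t₀ := Ioo_mem_nhdsLT_of_mem ⟨ht₀pos, le_refl _⟩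
  have hfm : f t₀ = m := by
    refine le_antisymm ht₀le ?_
    have htend : Tendsto f (𝓝[<] t₀) (𝓝 (f t₀)) :=
      (hd t₀ ht₀0).continuousAt.continuousWithinAt
    refine ge_of_tendsto htend ?_
    filter_upwards [hIoo] with t ht
    exact le_of_lt (hlt t (le_of_lt ht.1) ht.2)
  have hder : 0 < f' t₀ := hpos t₀ ht₀0 hfm
  have hslope : Tendsto (slope f t₀) (𝓝[≠] t₀) (𝓝 (f' t₀)) :=
    hasDerivAt_iff_tendsto_slope.1 (hd t₀ ht₀0)
  have hslope' : Tendsto (slope f t₀) (𝓝[<] t₀) (𝓝 (f' t₀)) :=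
    hslope.mono_left (nhdsWithin_mono t₀ (fun x hx => ne_of_lt hx))
  have hev : ∀ᶠ t in 𝓝[<] t₀, 0 < slope f t₀ t :=
    hslope'.eventually (eventually_gt_nhds hder)
  have : ∀ᶠ t in 𝓝[<] t₀, False := by
    filter_upwards [hev, hIoo] with t hs ht
    rw [slope_def_field] at hs
    have h1 : t - t₀ < 0 := sub_neg.2 ht.2
    have h2 : f t - f t₀ < 0 := by
      by_contra h
      push_neg at h
      nlinarith [div_nonpos_of_nonneg_of_nonpos h (le_of_lt h1)]
    have := hlt t (le_of_lt ht.1) ht.2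
    rw [hfm] at h2
    linarith
  exact this.exists.choose_spec

theorem u_layer_exponential_convergence (κm κ₃ v₀ : ℝ) (hm : 0 < κm) (h3 : 0 < κ₃)
    (uhat : ℝ → ℝ) (h0 : 0 < uhat 0)
    (hode : ∀ τ ≥ (0 : ℝ), HasDerivAt uhat (-κ₃ * uhat τ * (uhat τ - v₀) + κm) τ) :
    ∃ C c : ℝ, 0 < C ∧ 0 < c ∧ ∀ τ ≥ (0 : ℝ),
      |uhat τ - (v₀ + Real.sqrt (v₀ ^ 2 + 4 * κm / κ₃)) / 2| ≤ C * Real.exp (-c * τ) := by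
  set s := Real.sqrt (v₀ ^ 2 + 4 * κm / κ₃) with hsdef
  have hs0 : 0 ≤ s := Real.sqrt_nonneg _
  have hs2 : s ^ 2 = v₀ ^ 2 + 4 * κm / κ₃ := by
    rw [hsdef, Real.sq_sqrt]; positivity
  have hs2' : κ₃ * s ^ 2 = κ₃ * v₀ ^ 2 + 4 * κm := by
    rw [hs2]; field_simp
  have hgt : v₀ ^ 2 < s ^ 2 := by
    rw [hs2]; have : 0 < 4 * κm / κ₃ := by positivity
    linarith
  set U := (v₀ + s) / 2 with hU
  set L := (v₀ - s) / 2 with hL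
  have hUpos : 0 < U := by
    rw [hU]; nlinarith [hgt, hs0, sq_nonneg (v₀ + s)]
  have hLneg : L < 0 := by
    rw [hL]; nlinarith [hgt, hs0, sq_nonneg (v₀ - s)]
  have hfact : ∀ u : ℝ, -κ₃ * u * (u - v₀) + κm = -κ₃ * (u - U) * (u - L) := by
    intro u
    rw [hU, hL]
    linear_combination (-(1:ℝ)/4) * hs2'
  set m := min (uhat 0) U / 2 with hmdef
  have hmin_pos : 0 < min (uhat 0) U := lt_min h0 hUpos
  have hmpos : 0 < m := by rw [hmdef]; positivity
  have hmltU : m < U := by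
    have h1 : min (uhat 0) U ≤ U := min_le_right _ _
    rw [hmdef]; linarith
  have hmlt0 : m < uhat 0 := by
    have h1 : min (uhat 0) U ≤ uhat 0 := min_le_left _ _
    rw [hmdef]; linarith
  -- lower bound: uhat stays above m
  have hlow : ∀ τ ≥ (0:ℝ), m < uhat τ := by
    refine ode_barrier uhat (fun τ => -κ₃ * uhat τ * (uhat τ - v₀) + κm) m hmlt0 hode ?_
    intro τ _ heq
    show 0 < -κ₃ * uhat τ * (uhat τ - v₀) + κm
    rw [heq, hfact]
    have h1 : 0 < m - L := by linarith
    have h2 := mul_pos (mul_pos h3 (sub_pos.mpr hmltU)) h1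
    nlinarith [h2]
  set c := κ₃ * m with hcdef
  have hcpos : 0 < c := by rw [hcdef]; positivity
  set φ : ℝ → ℝ := fun τ => (uhat τ - U) ^ 2 * Real.exp (2 * c * τ) with hφdef
  have hφd : ∀ τ ≥ (0:ℝ), HasDerivAt φ
      ((2 * (uhat τ - U) * (-κ₃ * uhat τ * (uhat τ - v₀) + κm)) * Real.exp (2 * c * τ)
        + (uhat τ - U) ^ 2 * (Real.exp (2 * c * τ) * (2 * c))) τ := by
    intro τ hτ
    have h1 : HasDerivAt (fun τ => uhat τ - U) (-κ₃ * uhat τ * (uhat τ - v₀) + κm) τ :=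
      (hode τ hτ).sub_const U
    have h2 : HasDerivAt (fun τ => (uhat τ - U) ^ 2)
        (2 * (uhat τ - U) * (-κ₃ * uhat τ * (uhat τ - v₀) + κm)) τ := by
      have := h1.fun_pow 2
      simpa using this
    have h3 : HasDerivAt (fun τ : ℝ => Real.exp (2 * c * τ))
        (Real.exp (2 * c * τ) * (2 * c)) τ := by
      have := ((hasDerivAt_id τ).const_mul (2 * c)).exp
      simpa using this
    exact h2.mul h3
  have hanti : AntitoneOn φ (Ici 0) := by
    refine antitoneOn_of_deriv_nonpos (convex_Ici 0) ?_ ?_ ?_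
    · exact fun τ hτ => ((hφd τ hτ).continuousAt).continuousWithinAt
    · rw [interior_Ici]
      exact fun τ hτ => ((hφd τ (le_of_lt hτ)).differentiableAt).differentiableWithinAt
    · rw [interior_Ici]
      intro τ hτ
      rw [(hφd τ (le_of_lt hτ)).deriv]
      have hlowτ : m < uhat τ := hlow τ (le_of_lt hτ)
      have hexp : 0 < Real.exp (2 * c * τ) := Real.exp_pos _
      rw [hfact]
      have key : 2 * (uhat τ - U) * (-κ₃ * (uhat τ - U) * (uhat τ - L))
          + (uhat τ - U) ^ 2 * (2 * c) ≤ 0 := by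
        have h1 : (uhat τ - U) ^ 2 * (κ₃ * (uhat τ - L) - c) ≥ 0 := by
          apply mul_nonneg (sq_nonneg _)
          rw [hcdef]
          have : m ≤ uhat τ - L := by linarith
          nlinarith
        nlinarith
      nlinarith
  have hbound : ∀ τ ≥ (0:ℝ), (uhat τ - U) ^ 2 * Real.exp (2 * c * τ) ≤ (uhat 0 - U) ^ 2 := by
    intro τ hτ
    have h := hanti (self_mem_Ici) hτ hτ
    simpa [hφdef] using h
  refine ⟨|uhat 0 - U| + 1, c, by positivity, hcpos, ?_⟩
  intro τ hτ
  have hφτ := hbound τ hτ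
  have hexp1 : Real.exp (2 * c * τ) * Real.exp (-c * τ) * Real.exp (-c * τ) = 1 := by
    rw [← Real.exp_add, ← Real.exp_add, ← Real.exp_zero]
    ring_nf
  have hey : (0:ℝ) < Real.exp (-c * τ) := Real.exp_pos _
  have hYY : (0:ℝ) ≤ Real.exp (-c * τ) * Real.exp (-c * τ) := by positivity
  have h1 : (uhat 0 - U) ^ 2 ≤ (|uhat 0 - U| + 1) ^ 2 := by
    nlinarith [abs_nonneg (uhat 0 - U), sq_abs (uhat 0 - U)]
  have hsq : (uhat τ - U) ^ 2 ≤ ((|uhat 0 - U| + 1) * Real.exp (-c * τ)) ^ 2 := by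
    calc (uhat τ - U) ^ 2
        = (uhat τ - U) ^ 2 * Real.exp (2 * c * τ)
            * (Real.exp (-c * τ) * Real.exp (-c * τ)) := by
          have e2 : (uhat τ - U) ^ 2 * Real.exp (2 * c * τ)
              * (Real.exp (-c * τ) * Real.exp (-c * τ))
              = (uhat τ - U) ^ 2
                * (Real.exp (2 * c * τ) * Real.exp (-c * τ) * Real.exp (-c * τ)) := by
            ring
          rw [e2, hexp1, mul_one]
      _ ≤ (uhat 0 - U) ^ 2 * (Real.exp (-c * τ) * Real.exp (-c * τ)) :=
          mul_le_mul_of_nonneg_right hφτ hYY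
      _ ≤ (|uhat 0 - U| + 1) ^ 2 * (Real.exp (-c * τ) * Real.exp (-c * τ)) :=
          mul_le_mul_of_nonneg_right h1 hYY
      _ = ((|uhat 0 - U| + 1) * Real.exp (-c * τ)) ^ 2 := by ring
  have h2 : (0:ℝ) ≤ (|uhat 0 - U| + 1) * Real.exp (-c * τ) := by positivity
  calc |uhat τ - U| = Real.sqrt ((uhat τ - U) ^ 2) := (Real.sqrt_sq_eq_abs _).symm
    _ ≤ Real.sqrt (((|uhat 0 - U| + 1) * Real.exp (-c * τ)) ^ 2) := Real.sqrt_le_sqrt hsq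
    _ = (|uhat 0 - U| + 1) * Real.exp (-c * τ) := Real.sqrt_sq h2
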